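/- arXiv:2603.21683 — 2 statements merged into one kernel-verified Lean document; each statement's English description precedes it below -/
import Mathlib

section
/- Let λ be the Lebesgue (uniform) probability measure on I = [0,1], let ν be a non-atomic Borel probability measure on ℝ^d, and let (μ^u)_{u ∈ I} be a measurable family of Borel probability measures on ℝ^d (i.e., a Markov kernel from I to ℝ^d) satisfying ∫_I ∫_{ℝ^d} |x|² μ^u(dx) λ(du) < ∞. Then there exists a jointly measurable map T : I × ℝ^d → ℝ^d such that T(u,·)♯ν = μ^u for λ-a.e. u ∈ I, and T is square-integrable with respect to λ ⊗ ν, i.e. ∫_I ∫_{ℝ^d} |T(u,x)|² ν(dx) λ(du) < ∞. -/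
open MeasureTheory ProbabilityTheory Set Filter Topology
open scoped ENNReal NNReal

namespace SamplingAux

/-- The (left-continuous generalized inverse) quantile function of a real measure,
with junk value `0` outside `(0,1)`. -/
noncomputable def quantileFun (μ : Measure ℝ) (t : ℝ) : ℝ :=
  if t ∈ Set.Ioo (0:ℝ) 1 then sInf {x | t ≤ cdf μ x} else 0

variable (μ : Measure ℝ) [IsProbabilityMeasure μ]

lemma exists_cdf_lt {t : ℝ} (ht : 0 < t) : ∃ x, cdf μ x < t :=
  ((tendsto_cdf_atBot μ).eventually_lt_const ht).exists

lemma exists_lt_cdf {t : ℝ} (ht : t < 1) : ∃ x, t < cdf μ x :=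
  ((tendsto_cdf_atTop μ).eventually_const_lt ht).exists

lemma sInf_cdf_le_iff {t : ℝ} (ht0 : 0 < t) (ht1 : t < 1) (c : ℝ) :
    sInf {x | t ≤ cdf μ x} ≤ c ↔ t ≤ cdf μ c := by
  obtain ⟨x₀, hx₀⟩ := exists_cdf_lt μ ht0
  obtain ⟨x₁, hx₁⟩ := exists_lt_cdf μ ht1
  have hne : ({x | t ≤ cdf μ x}).Nonempty := ⟨x₁, hx₁.le⟩
  have hbdd : BddBelow {x | t ≤ cdf μ x} := by
    refine ⟨x₀, fun y hy => ?_⟩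
    by_contra h
    exact absurd (((monotone_cdf μ) (not_le.1 h).le).trans_lt hx₀) (not_lt.2 hy)
  constructor
  · intro h
    have key : t ≤ cdf μ (sInf {x | t ≤ cdf μ x}) := by
      have h2 : ∀ᶠ x in 𝓝[>] (sInf {x | t ≤ cdf μ x}), t ≤ cdf μ x := by
        refine eventually_nhdsWithin_of_forall fun x hx => ?_
        obtain ⟨y, hy, hyx⟩ := exists_lt_of_csInf_lt hne hx
        exact le_trans hy ((monotone_cdf μ) hyx.le)
      exact ge_of_tendsto
        (((cdf μ).right_continuous _).mono_left (nhdsWithin_mono _ Ioi_subset_Ici_self)) h2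
    exact key.trans ((monotone_cdf μ) h)
  · exact fun h => csInf_le hbdd h

lemma quantileFun_le_iff {t : ℝ} (ht : t ∈ Set.Ioo (0:ℝ) 1) (c : ℝ) :
    quantileFun μ t ≤ c ↔ t ≤ cdf μ c := by
  rw [quantileFun, if_pos ht]
  exact sInf_cdf_le_iff μ ht.1 ht.2 c

lemma measurable_quantileFun : Measurable (quantileFun μ) := by
  refine measurable_of_Iic fun c => ?_
  by_cases hc : (0:ℝ) ≤ c
  · have hset : quantileFun μ ⁻¹' Iic c = (Ioo (0:ℝ) 1 ∩ Iic (cdf μ c)) ∪ (Ioo (0:ℝ) 1)ᶜ := by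
      ext t
      by_cases ht : t ∈ Ioo (0:ℝ) 1
      · simp only [mem_preimage, mem_Iic, mem_union, mem_inter_iff, ht, true_and,
          mem_compl_iff, not_true_eq_false, or_false]
        exact quantileFun_le_iff μ ht c
      · simp [quantileFun, ht, hc]
    rw [hset]
    exact (measurableSet_Ioo.inter measurableSet_Iic).union measurableSet_Ioo.compl
  · have hset : quantileFun μ ⁻¹' Iic c = Ioo (0:ℝ) 1 ∩ Iic (cdf μ c) := by
      ext t
      by_cases ht : t ∈ Ioo (0:ℝ) 1
      · simp only [mem_preimage, mem_Iic, mem_inter_iff, ht, true_and]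
        exact quantileFun_le_iff μ ht c
      · simp [quantileFun, ht, hc]
    rw [hset]
    exact measurableSet_Ioo.inter measurableSet_Iic

instance : IsFiniteMeasure ((volume : Measure ℝ).restrict (Ioo (0:ℝ) 1)) :=
  ⟨by rw [Measure.restrict_apply_univ]; simp [Real.volume_Ioo]⟩

/-- The quantile function pushes the uniform measure on `(0,1)` forward to `μ`. -/
lemma map_quantileFun :
    ((volume : Measure ℝ).restrict (Ioo (0:ℝ) 1)).map (quantileFun μ) = μ := by
  have hg := measurable_quantileFun μ
  haveI := ((volume : Measure ℝ).restrict (Ioo (0:ℝ) 1)).isFiniteMeasure_map (quantileFun μ)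
  refine Measure.ext_of_Iic _ _ fun c => ?_
  rw [Measure.map_apply hg measurableSet_Iic,
    Measure.restrict_apply (hg measurableSet_Iic), ← ofReal_cdf μ c]
  have hset : quantileFun μ ⁻¹' Iic c ∩ Ioo 0 1 = Iic (cdf μ c) ∩ Ioo 0 1 := by
    ext t
    simp only [mem_inter_iff, mem_preimage, mem_Iic, and_congr_left_iff]
    exact fun ht => quantileFun_le_iff μ ht c
  rw [hset]
  refine le_antisymm ?_ ?_
  · calc volume (Iic (cdf μ c) ∩ Ioo 0 1) ≤ volume (Ioc 0 (cdf μ c)) :=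
        measure_mono (fun t ht => ⟨ht.2.1, ht.1⟩)
      _ = ENNReal.ofReal (cdf μ c) := by rw [Real.volume_Ioc, sub_zero]
  · calc ENNReal.ofReal (cdf μ c)
        = volume (Ioo 0 (cdf μ c)) := by rw [Real.volume_Ioo, sub_zero]
      _ ≤ volume (Iic (cdf μ c) ∩ Ioo 0 1) :=
        measure_mono (fun t ht => ⟨ht.2.le, ht.1, ht.2.trans_le (cdf_le_one μ c)⟩)

/-- For a non-atomic probability measure on `ℝ`, the cdf pushes it forward to the uniform
measure on `(0,1)`. -/
lemma map_cdf [NullSingletonClass μ] :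
    μ.map (cdf μ) = (volume : Measure ℝ).restrict (Ioo (0:ℝ) 1) := by
  haveI := μ.isFiniteMeasure_map (cdf μ)
  refine Measure.ext_of_Iic _ _ fun t => ?_
  rw [Measure.map_apply (cdf μ).mono.measurable measurableSet_Iic,
    Measure.restrict_apply measurableSet_Iic]
  rcases lt_or_ge t 0 with ht | ht
  · have h1 : (cdf μ) ⁻¹' Iic t = ∅ := by
      refine eq_empty_iff_forall_notMem.2 fun x hx => ?_
      exact absurd (le_trans (cdf_nonneg μ x) hx) (not_le.2 ht)
    have h2 : Iic t ∩ Ioo (0:ℝ) 1 = ∅ := by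
      refine eq_empty_iff_forall_notMem.2 fun x hx => ?_
      exact absurd (lt_of_lt_of_le hx.2.1 hx.1) (not_lt.2 ht.le)
    rw [h1, h2, measure_empty, measure_empty]
  · rcases lt_or_ge t 1 with ht1 | ht1
    · have hIic : Iic t ∩ Ioo (0:ℝ) 1 = Ioc 0 t := by
        ext x
        constructor
        · rintro ⟨h1, h2, _⟩; exact ⟨h2, h1⟩
        · rintro ⟨h1, h2⟩; exact ⟨h2, h1, lt_of_le_of_lt h2 ht1⟩
      rw [hIic, Real.volume_Ioc, sub_zero]
      rcases eq_empty_or_nonempty ((cdf μ) ⁻¹' Iic t) with hAe | hAne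
      · rcases eq_or_lt_of_le ht with h0 | h0
        · rw [hAe, ← h0]; simp
        · obtain ⟨x, hx⟩ := exists_cdf_lt μ h0
          exact absurd (hAe ▸ (hx.le : x ∈ (cdf μ) ⁻¹' Iic t)) (notMem_empty x)
      · have hbddA : BddAbove ((cdf μ) ⁻¹' Iic t) := by
          obtain ⟨x₁, hx₁⟩ := exists_lt_cdf μ ht1
          refine ⟨x₁, fun y hy => ?_⟩
          by_contra h
          exact absurd (lt_of_lt_of_le hx₁ ((monotone_cdf μ) (not_le.1 h).le)) (not_lt.2 hy)
        set s := sSup ((cdf μ) ⁻¹' Iic t) with hs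
        have hlt : ∀ x < s, cdf μ x ≤ t := by
          intro x hx
          obtain ⟨y, hy, hxy⟩ := exists_lt_of_lt_csSup hAne hx
          exact le_trans ((monotone_cdf μ) hxy.le) hy
        have hcs_le : cdf μ s ≤ t := by
          have hll : Function.leftLim (cdf μ) s ≤ t :=
            le_of_tendsto ((cdf μ).mono.tendsto_leftLim s)
              (eventually_nhdsWithin_of_forall fun x hx => hlt x hx)
          have hatom := (cdf μ).measure_singleton s
          rw [measure_cdf μ, measure_singleton] at hatom
          have hd : cdf μ s - Function.leftLim (cdf μ) s ≤ 0 := by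
            rw [eq_comm, ENNReal.ofReal_eq_zero] at hatom
            exact hatom
          linarith [hd, hll]
        have hcs_ge : t ≤ cdf μ s := by
          by_contra h
          have h' := ((cdf μ).right_continuous s).eventually_lt_const (not_le.1 h)
          have h2 : ∀ᶠ x in 𝓝[>] s, cdf μ x < t :=
            h'.filter_mono (nhdsWithin_mono _ Ioi_subset_Ici_self)
          obtain ⟨x, hxlt, hxs⟩ := (h2.and eventually_mem_nhdsWithin).exists
          exact absurd (le_csSup hbddA (hxlt.le : x ∈ (cdf μ) ⁻¹' Iic t)) (not_le.2 hxs)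
        refine le_antisymm ?_ ?_
        · calc μ ((cdf μ) ⁻¹' Iic t) ≤ μ (Iic s) :=
              measure_mono fun y hy => le_csSup hbddA hy
            _ = ENNReal.ofReal (cdf μ s) := (ofReal_cdf μ s).symm
            _ ≤ ENNReal.ofReal t := ENNReal.ofReal_le_ofReal hcs_le
        · calc ENNReal.ofReal t ≤ ENNReal.ofReal (cdf μ s) :=
              ENNReal.ofReal_le_ofReal hcs_ge
            _ = μ (Iic s) := ofReal_cdf μ s
            _ = μ (Iio s) := (measure_congr Iio_ae_eq_Iic).symm
            _ ≤ μ ((cdf μ) ⁻¹' Iic t) := measure_mono fun y hy => hlt y hy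
    · have h1 : (cdf μ) ⁻¹' Iic t = univ :=
        eq_univ_of_forall fun x => (cdf_le_one μ x).trans ht1
      have h2 : Iic t ∩ Ioo (0:ℝ) 1 = Ioo 0 1 :=
        inter_eq_right.2 fun x hx => le_trans hx.2.le ht1
      rw [h1, h2]
      simp [Real.volume_Ioo, measure_univ]

end SamplingAux

open SamplingAux

/-- Sampling lemma on `M_λ`: given the uniform measure `λ` on `I = [0,1]`, a non-atomic
Borel probability measure `ν` on `ℝ^d`, and a Markov kernel `u ↦ μ^u` from `I` to `ℝ^d`
with `∫_I ∫ |x|² μ^u(dx) λ(du) < ∞`, there is a jointly measurable map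
`T : I × ℝ^d → ℝ^d`, square-integrable for `λ ⊗ ν`, with `T(u,·)♯ν = μ^u` for
`λ`-a.e. `u`. -/
theorem exists_measurable_transport_of_kernel {d : ℕ}
    (ν : Measure (EuclideanSpace ℝ (Fin d))) [IsProbabilityMeasure ν] [NullSingletonClass ν]
    (κ : Kernel (Set.Icc (0:ℝ) 1) (EuclideanSpace ℝ (Fin d))) [IsMarkovKernel κ]
    (hκ : ∫⁻ u, ∫⁻ x, ‖x‖₊ ^ 2 ∂(κ u) ∂(volume : Measure (Set.Icc (0:ℝ) 1)) < ⊤) :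
    ∃ T : (Set.Icc (0:ℝ) 1) × (EuclideanSpace ℝ (Fin d)) → EuclideanSpace ℝ (Fin d),
      Measurable T ∧
      (∀ᵐ u ∂(volume : Measure (Set.Icc (0:ℝ) 1)),
        ν.map (fun x => T (u, x)) = κ u) ∧
      ∫⁻ p, ‖T p‖₊ ^ 2 ∂((volume : Measure (Set.Icc (0:ℝ) 1)).prod ν) < ⊤ := by
  classical
  have he : MeasurableEmbedding (embeddingReal (EuclideanSpace ℝ (Fin d))) :=
    measurableEmbedding_embeddingReal _
  set e : EuclideanSpace ℝ (Fin d) → ℝ := embeddingReal (EuclideanSpace ℝ (Fin d)) with hedef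
  -- measurable left inverse of `e`
  set r : ℝ → EuclideanSpace ℝ (Fin d) := Function.extend e id (fun _ => 0) with hrdef
  have hr : Measurable r := he.measurable_extend measurable_id measurable_const
  have hre : ∀ y, r (e y) = y := fun y => he.injective.extend_apply _ _ y
  -- the pushforward of ν to ℝ
  haveI hν' : IsProbabilityMeasure (ν.map e) :=
    Measure.isProbabilityMeasure_map he.measurable.aemeasurable
  haveI hν'na : NullSingletonClass (ν.map e) := by
    refine ⟨fun x => ?_⟩
    rw [Measure.map_apply he.measurable (measurableSet_singleton x)]
    by_cases hx : ∃ y, e y = x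
    · obtain ⟨y, rfl⟩ := hx
      have : e ⁻¹' {e y} = {y} := by
        ext z
        simp [he.injective.eq_iff]
      rw [this]
      exact measure_singleton y
    · have : e ⁻¹' {x} = ∅ := by
        refine eq_empty_iff_forall_notMem.2 fun z hz => hx ⟨z, hz⟩
      rw [this]
      exact measure_empty
  haveI hκprob : ∀ u, IsProbabilityMeasure ((κ u).map e) := fun u =>
    Measure.isProbabilityMeasure_map he.measurable.aemeasurable
  -- the "uniformization" map S
  set S : EuclideanSpace ℝ (Fin d) → ℝ := fun x => cdf (ν.map e) (e x) with hSdef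
  have hS : Measurable S := (cdf (ν.map e)).mono.measurable.comp he.measurable
  have hmapS : ν.map S = (volume : Measure ℝ).restrict (Ioo (0:ℝ) 1) := by
    have h1 : S = (cdf (ν.map e)) ∘ e := rfl
    rw [h1, ← Measure.map_map (cdf (ν.map e)).mono.measurable he.measurable, map_cdf (ν.map e)]
  -- the transport map
  set T : (Set.Icc (0:ℝ) 1) × (EuclideanSpace ℝ (Fin d)) → EuclideanSpace ℝ (Fin d) :=
    fun p => r (quantileFun ((κ p.1).map e) (S p.2)) with hTdef
  -- joint measurability
  have hcdfmeas : ∀ c : ℝ, Measurable fun u => cdf ((κ u).map e) c := by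
    intro c
    have h : ∀ u, cdf ((κ u).map e) c = (κ u (e ⁻¹' Iic c)).toReal := fun u => by
      rw [cdf_eq_real, measureReal_def, Measure.map_apply he.measurable measurableSet_Iic]
    simp_rw [h]
    exact (κ.measurable_coe (he.measurable measurableSet_Iic)).ennreal_toReal
  have hQ : Measurable fun p : (Set.Icc (0:ℝ) 1) × ℝ => quantileFun ((κ p.1).map e) p.2 := by
    refine measurable_of_Iic fun c => ?_
    have hm1 : MeasurableSet {p : (Set.Icc (0:ℝ) 1) × ℝ |
        p.2 ∈ Ioo (0:ℝ) 1 ∧ p.2 ≤ cdf ((κ p.1).map e) c} :=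
      (measurable_snd measurableSet_Ioo).inter
        (measurableSet_le measurable_snd ((hcdfmeas c).comp measurable_fst))
    by_cases hc : (0:ℝ) ≤ c
    · have hset : (fun p : (Set.Icc (0:ℝ) 1) × ℝ => quantileFun ((κ p.1).map e) p.2) ⁻¹' Iic c
          = {p : (Set.Icc (0:ℝ) 1) × ℝ | p.2 ∈ Ioo (0:ℝ) 1 ∧ p.2 ≤ cdf ((κ p.1).map e) c}
            ∪ {p : (Set.Icc (0:ℝ) 1) × ℝ | p.2 ∈ Ioo (0:ℝ) 1}ᶜ := by
        ext p
        by_cases hp : p.2 ∈ Ioo (0:ℝ) 1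
        · simp only [mem_preimage, mem_Iic, mem_union, mem_setOf_eq, hp, true_and,
            mem_compl_iff, not_true_eq_false, or_false]
          exact quantileFun_le_iff _ hp c
        · have hp' : ¬(0 < p.2 ∧ p.2 < 1) := by simpa [Set.mem_Ioo] using hp
          simp [quantileFun, Set.mem_Ioo, hp', hc]
      rw [hset]
      exact hm1.union ((measurable_snd measurableSet_Ioo).compl)
    · have hset : (fun p : (Set.Icc (0:ℝ) 1) × ℝ => quantileFun ((κ p.1).map e) p.2) ⁻¹' Iic c
          = {p : (Set.Icc (0:ℝ) 1) × ℝ | p.2 ∈ Ioo (0:ℝ) 1 ∧ p.2 ≤ cdf ((κ p.1).map e) c} := by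
        ext p
        by_cases hp : p.2 ∈ Ioo (0:ℝ) 1
        · simp only [mem_preimage, mem_Iic, mem_setOf_eq, hp, true_and]
          exact quantileFun_le_iff _ hp c
        · have hp' : ¬(0 < p.2 ∧ p.2 < 1) := by simpa [Set.mem_Ioo] using hp
          simp [quantileFun, Set.mem_Ioo, hp', hc]
      rw [hset]
      exact hm1
  have hT : Measurable T :=
    hr.comp (hQ.comp (measurable_fst.prodMk (hS.comp measurable_snd)))
  have hTu : ∀ u, Measurable fun x => T (u, x) := fun u => hT.comp measurable_prodMk_left
  -- the pushforward property, for every u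
  have hmain : ∀ u, ν.map (fun x => T (u, x)) = κ u := by
    intro u
    have hQu : Measurable (quantileFun ((κ u).map e)) := measurable_quantileFun _
    have h2 : (fun x => T (u, x)) = (r ∘ quantileFun ((κ u).map e)) ∘ S := rfl
    rw [h2, ← Measure.map_map (hr.comp hQu) hS, hmapS,
      ← Measure.map_map hr hQu, map_quantileFun ((κ u).map e),
      Measure.map_map hr he.measurable]
    have h3 : r ∘ e = id := funext hre
    rw [h3, Measure.map_id]
  refine ⟨T, hT, Eventually.of_forall hmain, ?_⟩
  have hT2 : Measurable fun y : EuclideanSpace ℝ (Fin d) => (‖y‖₊ : ℝ≥0∞) ^ 2 :=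
    measurable_nnnorm.coe_nnreal_ennreal.pow_const 2
  have hcalc : ∫⁻ p, ‖T p‖₊ ^ 2 ∂((volume : Measure (Set.Icc (0:ℝ) 1)).prod ν)
      = ∫⁻ u, ∫⁻ x, ‖x‖₊ ^ 2 ∂(κ u) ∂(volume : Measure (Set.Icc (0:ℝ) 1)) := by
    rw [lintegral_prod (fun p => (‖T p‖₊ : ℝ≥0∞) ^ 2) (hT2.comp hT).aemeasurable]
    refine lintegral_congr fun u => ?_
    rw [← hmain u, lintegral_map hT2 (hTu u)]
  rw [hcalc]
  exact hκ
end

section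
/- Let T > 0, B ∈ ℝ^{d×d}, C ∈ ℝ^{d×m}, N ∈ ℝ^{m×m} symmetric positive definite, and H ∈ ℝ^{d×d} symmetric positive semidefinite. Then there exists a unique continuously differentiable map K : [0,T] → ℝ^{d×d} taking values in symmetric matrices such that K(T) = H and K'(t) + Bᵀ K(t) + K(t) B − K(t) C N⁻¹ Cᵀ K(t) = 0 for all t ∈ [0,T]. Moreover, K(t) is positive semidefinite for every t ∈ [0,T]. -/
open Matrix Set

attribute [local instance] Matrix.frobeniusNormedAddCommGroup Matrix.frobeniusNormedSpace

open NormedSpace intervalIntegral MeasureTheory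

attribute [local instance] Matrix.frobeniusNormedRing Matrix.frobeniusNormedAlgebra

namespace RiccatiAux

variable {d : ℕ} (T : ℝ) (B S H : Matrix (Fin d) (Fin d) ℝ)

noncomputable def E (t : ℝ) : Matrix (Fin d) (Fin d) ℝ := exp ((T - t) • B)

lemma hasDerivAt_E (t : ℝ) : HasDerivAt (E T B) (-(B * E T B t)) t := by
  have h1 : HasDerivAt (fun u : ℝ => exp (u • B)) (B * exp ((T - t) • B)) (T - t) :=
    hasDerivAt_exp_smul_const' B (T - t)
  have h2 : HasDerivAt (fun s : ℝ => T - s) (-1) t := (hasDerivAt_id t).const_sub T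
  have := h1.scomp t h2
  simp only [neg_one_smul] at this
  exact this

lemma continuous_E : Continuous (E T B) :=
  exp_continuous.comp ((continuous_const.sub continuous_id).smul continuous_const)

lemma commute_B_E (t : ℝ) : B * E T B t = E T B t * B := by
  have : Commute B ((T - t) • B) := (Commute.refl B).smul_right _
  exact this.exp_right.eq

lemma E_apply_T : E T B T = 1 := by simp [E]

/-- transpose as a continuous linear map -/
noncomputable def tCLM : Matrix (Fin d) (Fin d) ℝ →L[ℝ] Matrix (Fin d) (Fin d) ℝ :=
  LinearMap.toContinuousLinearMap
    { toFun := fun M => Mᵀ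
      map_add' := fun M N => Matrix.transpose_add M N
      map_smul' := fun c M => Matrix.transpose_smul c M }

@[simp] lemma tCLM_apply (M : Matrix (Fin d) (Fin d) ℝ) : tCLM M = Mᵀ := rfl

/-- quadratic form as a continuous linear map -/
noncomputable def qCLM (x : Fin d → ℝ) : Matrix (Fin d) (Fin d) ℝ →L[ℝ] ℝ :=
  LinearMap.toContinuousLinearMap
    { toFun := fun M => x ⬝ᵥ (M *ᵥ x)
      map_add' := fun M N => by simp [Matrix.add_mulVec, dotProduct_add]
      map_smul' := fun c M => by simp [Matrix.smul_mulVec, dotProduct_smul] }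

@[simp] lemma qCLM_apply (x : Fin d → ℝ) (M : Matrix (Fin d) (Fin d) ℝ) :
    qCLM x M = x ⬝ᵥ (M *ᵥ x) := rfl

lemma continuous_integrand : Continuous (fun s => E T B s * S * (E T B s)ᵀ) := by
  exact ((continuous_E T B).mul continuous_const).mul
    (tCLM.continuous.comp (continuous_E T B))

noncomputable def G (t : ℝ) : Matrix (Fin d) (Fin d) ℝ :=
  ∫ s in t..T, E T B s * S * (E T B s)ᵀ

lemma hasDerivAt_G (t : ℝ) : HasDerivAt (G T B S) (-(E T B t * S * (E T B t)ᵀ)) t := by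
  have hc := continuous_integrand T B S
  haveI : TopologicalSpace.PseudoMetrizableSpace (Matrix (Fin d) (Fin d) ℝ) :=
    inferInstanceAs (TopologicalSpace.PseudoMetrizableSpace (Fin d → Fin d → ℝ))
  have h : HasDerivAt (fun u => ∫ s in T..u, E T B s * S * (E T B s)ᵀ)
      (E T B t * S * (E T B t)ᵀ) t :=
    integral_hasDerivAt_right (hc.intervalIntegrable _ _)
      (hc.stronglyMeasurableAtFilter _ _) hc.continuousAt
  have h2 := h.neg
  have : G T B S = fun u => -∫ s in T..u, E T B s * S * (E T B s)ᵀ := by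
    funext u
    rw [G, intervalIntegral.integral_symm]
  rw [this]
  exact h2

lemma G_apply_T : G T B S T = 0 := by simp [G]

lemma transpose_G (hS : Sᵀ = S) (t : ℝ) : (G T B S t)ᵀ = G T B S t := by
  have hc := continuous_integrand T B S
  have : (G T B S t)ᵀ = ∫ s in t..T, (E T B s * S * (E T B s)ᵀ)ᵀ := by
    rw [G, ← tCLM_apply]
    exact (tCLM.intervalIntegral_comp_comm (hc.intervalIntegrable _ _)).symm
  rw [this, G]
  congr 1
  funext s
  rw [Matrix.transpose_mul, Matrix.transpose_mul, Matrix.transpose_transpose, hS, mul_assoc]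

lemma psd_integrand (hS : S.PosSemidef) (s : ℝ) : (E T B s * S * (E T B s)ᵀ).PosSemidef := by
  have := hS.mul_mul_conjTranspose_same (E T B s)
  rwa [conjTranspose_eq_transpose_of_trivial] at this

lemma psd_G (hS : S.PosSemidef) {t : ℝ} (ht : t ≤ T) : (G T B S t).PosSemidef := by
  refine PosSemidef.of_dotProduct_mulVec_nonneg ?_ ?_
  · rw [IsHermitian, conjTranspose_eq_transpose_of_trivial]
    exact transpose_G T B S (by rw [← conjTranspose_eq_transpose_of_trivial]; exact hS.1) t
  · intro x
    have hc := continuous_integrand T B S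
    have : x ⬝ᵥ (G T B S t *ᵥ x) = ∫ s in t..T, x ⬝ᵥ ((E T B s * S * (E T B s)ᵀ) *ᵥ x) := by
      rw [G, ← qCLM_apply]
      exact ((qCLM x).intervalIntegral_comp_comm (hc.intervalIntegrable _ _)).symm
    have hnn : 0 ≤ x ⬝ᵥ (G T B S t *ᵥ x) := by
      rw [this]
      apply intervalIntegral.integral_nonneg ht
      intro u _
      have := (psd_integrand T B S hS u).dotProduct_mulVec_nonneg x
      simpa using this
    simpa using hnn

end RiccatiAux

namespace RiccatiAux

variable {d : ℕ} (G H : Matrix (Fin d) (Fin d) ℝ)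

lemma isUnit_one_add (hG : G.PosSemidef) (hH : H.PosSemidef) : IsUnit (1 + G * H) := by
  rw [← Matrix.mulVec_injective_iff_isUnit]
  have h0 : ∀ v, (1 + G * H) *ᵥ v = 0 → v = 0 := by
    intro v hv
    rw [Matrix.add_mulVec, Matrix.one_mulVec, ← Matrix.mulVec_mulVec] at hv
    have hv' : G *ᵥ (H *ᵥ v) = -v := by
      linear_combination (norm := module) hv
    have key : (H *ᵥ v) ⬝ᵥ (G *ᵥ (H *ᵥ v)) = -(v ⬝ᵥ (H *ᵥ v)) := by
      rw [hv']
      rw [dotProduct_neg, dotProduct_comm]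
    have h1 : 0 ≤ (H *ᵥ v) ⬝ᵥ (G *ᵥ (H *ᵥ v)) := by simpa using hG.dotProduct_mulVec_nonneg (H *ᵥ v)
    have h2 : 0 ≤ v ⬝ᵥ (H *ᵥ v) := by simpa using hH.dotProduct_mulVec_nonneg v
    have h3 : v ⬝ᵥ (H *ᵥ v) = 0 := le_antisymm (by linarith [key, h1]) h2
    have h4 : H *ᵥ v = 0 := by
      have := (hH.dotProduct_mulVec_zero_iff v).mp (by simpa using h3)
      exact this
    have : -v = 0 := by rw [← hv', h4, Matrix.mulVec_zero]
    simpa using this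
  intro v w hvw
  have : (1 + G * H) *ᵥ (v - w) = 0 := by
    rw [Matrix.mulVec_sub, hvw, sub_self]
  have := h0 _ this
  linear_combination (norm := module) this

lemma WtH (hG : Gᵀ = G) (hH : Hᵀ = H) : (1 + G * H)ᵀ * H = H * (1 + G * H) := by
  rw [Matrix.transpose_add, Matrix.transpose_one, Matrix.transpose_mul, hG, hH]
  noncomm_ring

lemma symm_P (hG : Gᵀ = G) (hH : Hᵀ = H) (hW : IsUnit (1 + G * H)) :
    (H * Ring.inverse (1 + G * H))ᵀ = H * Ring.inverse (1 + G * H) := by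
  set W := 1 + G * H with hWdef
  set Wi := Ring.inverse W with hWi
  have h1 : W * Wi = 1 := Ring.mul_inverse_cancel _ hW
  have h2 : Wi * W = 1 := Ring.inverse_mul_cancel _ hW
  have key : Wᵀ * H = H * W := WtH G H hG hH
  have hWt : Wiᵀ * Wᵀ = 1 := by rw [← Matrix.transpose_mul, h1, Matrix.transpose_one]
  calc (H * Wi)ᵀ = Wiᵀ * H := by rw [Matrix.transpose_mul, hH]
    _ = Wiᵀ * H * (W * Wi) := by rw [h1, mul_one]
    _ = Wiᵀ * (H * W) * Wi := by noncomm_ring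
    _ = Wiᵀ * (Wᵀ * H) * Wi := by rw [key]
    _ = (Wiᵀ * Wᵀ) * (H * Wi) := by noncomm_ring
    _ = H * Wi := by rw [hWt, one_mul]

lemma psd_P (hG : G.PosSemidef) (hH : H.PosSemidef) (hW : IsUnit (1 + G * H)) :
    (H * Ring.inverse (1 + G * H)).PosSemidef := by
  have hGt : Gᵀ = G := by
    rw [← conjTranspose_eq_transpose_of_trivial]; exact hG.1
  have hHt : Hᵀ = H := by
    rw [← conjTranspose_eq_transpose_of_trivial]; exact hH.1
  set W := 1 + G * H with hWdef
  set Wi := Ring.inverse W with hWi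
  have h1 : W * Wi = 1 := Ring.mul_inverse_cancel _ hW
  refine PosSemidef.of_dotProduct_mulVec_nonneg ?_ ?_
  · rw [IsHermitian, conjTranspose_eq_transpose_of_trivial]
    exact symm_P G H hGt hHt hW
  · intro x
    have hx : W *ᵥ (Wi *ᵥ x) = x := by
      rw [Matrix.mulVec_mulVec, h1, Matrix.one_mulVec]
    set y := Wi *ᵥ x with hy
    have : x ⬝ᵥ ((H * Wi) *ᵥ x) = (W *ᵥ y) ⬝ᵥ (H *ᵥ y) := by
      rw [← Matrix.mulVec_mulVec, hx]
    rw [star_trivial, this]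
    have h2 : y ⬝ᵥ ((Wᵀ * H) *ᵥ y) = (W *ᵥ y) ⬝ᵥ (H *ᵥ y) := by
      rw [← Matrix.mulVec_mulVec, Matrix.dotProduct_mulVec y, Matrix.vecMul_transpose]
    rw [← h2, WtH G H hGt hHt]
    have hHGH : (H * G * H).PosSemidef := by
      have := hG.conjTranspose_mul_mul_same H
      rwa [conjTranspose_eq_transpose_of_trivial, hHt] at this
    have e1 : H * (1 + G * H) = H + H * G * H := by noncomm_ring
    rw [e1, Matrix.add_mulVec, dotProduct_add]
    have := hH.dotProduct_mulVec_nonneg y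
    have := hHGH.dotProduct_mulVec_nonneg y
    simp only [star_trivial] at *
    positivity

end RiccatiAux

namespace RiccatiAux

variable {d : ℕ} (T : ℝ) (B S H : Matrix (Fin d) (Fin d) ℝ)

noncomputable def W (t : ℝ) : Matrix (Fin d) (Fin d) ℝ := 1 + G T B S t * H

noncomputable def K (t : ℝ) : Matrix (Fin d) (Fin d) ℝ :=
  (E T B t)ᵀ * (H * Ring.inverse (W T B S H t)) * E T B t

lemma isUnit_W (hS : S.PosSemidef) (hH : H.PosSemidef) {t : ℝ} (ht : t ≤ T) :
    IsUnit (W T B S H t) :=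
  isUnit_one_add (G T B S t) H (psd_G T B S hS ht) hH

lemma K_apply_T : K T B S H T = H := by
  rw [K, W, G_apply_T, E_apply_T]
  simp

lemma symm_K (hS : S.PosSemidef) (hH : H.PosSemidef) {t : ℝ} (ht : t ≤ T) :
    (K T B S H t).IsSymm := by
  have hSt : Sᵀ = S := by rw [← conjTranspose_eq_transpose_of_trivial]; exact hS.1
  have hHt : Hᵀ = H := by rw [← conjTranspose_eq_transpose_of_trivial]; exact hH.1
  have hGt : (G T B S t)ᵀ = G T B S t := transpose_G T B S hSt t
  have hu : IsUnit (1 + G T B S t * H) := isUnit_one_add _ _ (psd_G T B S hS ht) hH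
  have hP := symm_P (G T B S t) H hGt hHt hu
  rw [Matrix.IsSymm, K, W]
  rw [Matrix.transpose_mul, Matrix.transpose_mul, Matrix.transpose_transpose, hP]
  noncomm_ring

lemma psd_K (hS : S.PosSemidef) (hH : H.PosSemidef) {t : ℝ} (ht : t ≤ T) :
    (K T B S H t).PosSemidef := by
  have hu : IsUnit (1 + G T B S t * H) := isUnit_one_add _ _ (psd_G T B S hS ht) hH
  have := (psd_P (G T B S t) H (psd_G T B S hS ht) hH hu).conjTranspose_mul_mul_same (E T B t)
  rw [conjTranspose_eq_transpose_of_trivial] at this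
  rw [K, W]
  exact this

lemma key_alg {R : Type*} [Ring R] (Bm Bt Et Ett H Wi S : Matrix (Fin d) (Fin d) ℝ)
    (hbe : Bm * Et = Et * Bm) (hbt : Ett * Bt = Bt * Ett) :
    (-(Ett * Bt) * (H * Wi) + Ett * (H * -(Wi * (-(Et * S * Ett) * H) * Wi))) * Et
        + Ett * (H * Wi) * -(Bm * Et)
      = -(Bt * (Ett * (H * Wi) * Et)) - Ett * (H * Wi) * Et * Bm
        + Ett * (H * Wi) * Et * S * (Ett * (H * Wi) * Et) := by
  rw [hbe, hbt]
  noncomm_ring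

lemma hasDerivAt_K {t : ℝ} (hu : IsUnit (W T B S H t)) :
    HasDerivAt (K T B S H)
      (-(Bᵀ * K T B S H t) - K T B S H t * B + K T B S H t * S * K T B S H t) t := by
  have hE' := hasDerivAt_E T B t
  have hEt' : HasDerivAt (fun s => (E T B s)ᵀ) (-((E T B t)ᵀ * Bᵀ)) t := by
    have := tCLM.hasFDerivAt.comp_hasDerivAt t hE'
    simp only [Function.comp_def, tCLM_apply, Matrix.transpose_neg, Matrix.transpose_mul] at this
    have e : tCLM (-(B * E T B t)) = -((E T B t)ᵀ * Bᵀ) := by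
      rw [tCLM_apply, Matrix.transpose_neg, Matrix.transpose_mul]
    exact this.congr_deriv e
  have hW' : HasDerivAt (W T B S H) (-(E T B t * S * (E T B t)ᵀ) * H) t :=
    ((hasDerivAt_G T B S t).mul_const H).const_add (1 : Matrix (Fin d) (Fin d) ℝ)
  have hu_coe : (hu.unit : Matrix (Fin d) (Fin d) ℝ) = W T B S H t := hu.unit_spec
  have hui : ((hu.unit⁻¹ : (Matrix (Fin d) (Fin d) ℝ)ˣ) : Matrix (Fin d) (Fin d) ℝ)
      = Ring.inverse (W T B S H t) := by
    conv_rhs => rw [← hu_coe]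
    exact (Ring.inverse_unit _).symm
  have hinv : HasDerivAt (fun s => Ring.inverse (W T B S H s))
      (-(Ring.inverse (W T B S H t) * (-(E T B t * S * (E T B t)ᵀ) * H)
          * Ring.inverse (W T B S H t))) t := by
    have hF := hasFDerivAt_ringInverse (𝕜 := ℝ) hu.unit
    rw [hu_coe] at hF
    have := hF.comp_hasDerivAt t hW'
    simp [hui] at this
    simp only [neg_mul, mul_neg, neg_neg]
    exact this
  have hP' : HasDerivAt (fun s => H * Ring.inverse (W T B S H s))
      (H * -(Ring.inverse (W T B S H t) * (-(E T B t * S * (E T B t)ᵀ) * H)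
          * Ring.inverse (W T B S H t))) t := hinv.const_mul H
  have hK1 := (hEt'.mul hP').mul hE'
  have hbe : B * E T B t = E T B t * B := commute_B_E T B t
  have hbt : (E T B t)ᵀ * Bᵀ = Bᵀ * (E T B t)ᵀ := by
    have := congrArg Matrix.transpose hbe
    simpa [Matrix.transpose_mul] using this
  have halg := key_alg (R := ℝ) B Bᵀ (E T B t) ((E T B t)ᵀ) H
    (Ring.inverse (W T B S H t)) S hbe hbt
  simp only [K]
  rw [← halg]
  exact hK1

lemma riccati_unique (B S : Matrix (Fin d) (Fin d) ℝ)
    (f g f' g' : ℝ → Matrix (Fin d) (Fin d) ℝ)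
    (hf : ∀ t ∈ Icc (0:ℝ) T, HasDerivWithinAt f (f' t) (Icc (0:ℝ) T) t)
    (hfeq : ∀ t ∈ Icc (0:ℝ) T, f' t = -(Bᵀ * f t) - f t * B + f t * S * f t)
    (hg : ∀ t ∈ Icc (0:ℝ) T, HasDerivWithinAt g (g' t) (Icc (0:ℝ) T) t)
    (hgeq : ∀ t ∈ Icc (0:ℝ) T, g' t = -(Bᵀ * g t) - g t * B + g t * S * g t)
    (hfg : f T = g T) : EqOn f g (Icc (0:ℝ) T) := by
  have hfc : ContinuousOn f (Icc (0:ℝ) T) := fun t ht => (hf t ht).continuousWithinAt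
  have hgc : ContinuousOn g (Icc (0:ℝ) T) := fun t ht => (hg t ht).continuousWithinAt
  rcases le_or_gt T 0 with hT0 | hT0
  · intro t ht
    rcases eq_or_lt_of_le hT0 with hT | hT
    · have h0 : t = T := le_antisymm (ht.2) (hT ▸ ht.1)
      rw [h0, hfg]
    · exact absurd (ht.1.trans ht.2) (not_le.mpr hT)
  obtain ⟨R₁, hR₁⟩ := (isCompact_Icc (a := (0:ℝ)) (b := T)).exists_bound_of_continuousOn hfc
  obtain ⟨R₂, hR₂⟩ := (isCompact_Icc (a := (0:ℝ)) (b := T)).exists_bound_of_continuousOn hgc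
  set R : ℝ := max R₁ R₂ with hR
  have hTmem : T ∈ Icc (0:ℝ) T := ⟨le_of_lt hT0, le_refl T⟩
  have hR0 : 0 ≤ R := le_trans (norm_nonneg (f T)) ((hR₁ T hTmem).trans (le_max_left _ _))
  have hfR : ∀ t ∈ Icc (0:ℝ) T, ‖f t‖ ≤ R := fun t ht => (hR₁ t ht).trans (le_max_left _ _)
  have hgR : ∀ t ∈ Icc (0:ℝ) T, ‖g t‖ ≤ R := fun t ht => (hR₂ t ht).trans (le_max_right _ _)
  set v : ℝ → Matrix (Fin d) (Fin d) ℝ → Matrix (Fin d) (Fin d) ℝ :=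
    fun _ X => -(Bᵀ * X) - X * B + X * S * X with hv_def
  set L : NNReal := (2 * ‖B‖ + 2 * R * ‖S‖).toNNReal with hL
  have hv : ∀ t, LipschitzOnWith L (v t) (Metric.closedBall 0 R) := by
    intro t
    rw [lipschitzOnWith_iff_dist_le_mul]
    intro X hX Y hY
    rw [Metric.mem_closedBall, dist_zero_right] at hX hY
    rw [dist_eq_norm, dist_eq_norm]
    have key : v t X - v t Y
        = -(Bᵀ * (X - Y)) - (X - Y) * B + (X * S * (X - Y) + (X - Y) * S * Y) := by
      simp only [hv_def]
      noncomm_ring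
    have hLc : (L : ℝ) = 2 * ‖B‖ + 2 * R * ‖S‖ := by
      rw [hL, Real.coe_toNNReal]
      positivity
    rw [key, hLc]
    have h1 : ‖Bᵀ * (X - Y)‖ ≤ ‖B‖ * ‖X - Y‖ := by
      calc ‖Bᵀ * (X - Y)‖ ≤ ‖Bᵀ‖ * ‖X - Y‖ := norm_mul_le _ _
        _ = ‖B‖ * ‖X - Y‖ := by rw [Matrix.frobenius_norm_transpose]
    have h2 : ‖(X - Y) * B‖ ≤ ‖X - Y‖ * ‖B‖ := norm_mul_le _ _
    have h3 : ‖X * S * (X - Y)‖ ≤ R * ‖S‖ * ‖X - Y‖ := by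
      refine (norm_mul_le _ _).trans (mul_le_mul_of_nonneg_right ?_ (norm_nonneg _))
      exact (norm_mul_le _ _).trans (mul_le_mul_of_nonneg_right hX (norm_nonneg _))
    have h4 : ‖(X - Y) * S * Y‖ ≤ ‖X - Y‖ * ‖S‖ * R := by
      refine (norm_mul_le _ _).trans (mul_le_mul (norm_mul_le _ _) hY (norm_nonneg _) ?_)
      positivity
    have main : ‖-(Bᵀ * (X - Y)) - (X - Y) * B + (X * S * (X - Y) + (X - Y) * S * Y)‖
        ≤ (‖B‖ * ‖X - Y‖ + ‖X - Y‖ * ‖B‖) + (R * ‖S‖ * ‖X - Y‖ + ‖X - Y‖ * ‖S‖ * R) := by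
      refine (norm_add_le _ _).trans (add_le_add ?_ ?_)
      · refine (norm_sub_le _ _).trans ?_
        rw [norm_neg]
        exact add_le_add h1 h2
      · exact (norm_add_le _ _).trans (add_le_add h3 h4)
    exact main.trans (le_of_eq (by ring))
  have hmem : ∀ t ∈ Ioc (0:ℝ) T, Icc (0:ℝ) T ∈ nhdsWithin t (Iic t) := by
    intro t ht
    have hsub : Ioi (0:ℝ) ∩ Iic t ⊆ Icc (0:ℝ) T :=
      fun u hu => ⟨le_of_lt hu.1, le_trans hu.2 ht.2⟩
    exact mem_nhdsWithin_iff_exists_mem_nhds_inter.mpr ⟨Ioi 0, Ioi_mem_nhds ht.1, hsub⟩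
  have hf' : ∀ t ∈ Ioc (0:ℝ) T, HasDerivWithinAt f (v t (f t)) (Iic t) t := by
    intro t ht
    have h1 := hf t ⟨le_of_lt ht.1, ht.2⟩
    rw [hfeq t ⟨le_of_lt ht.1, ht.2⟩] at h1
    exact h1.mono_of_mem_nhdsWithin (hmem t ht)
  have hg' : ∀ t ∈ Ioc (0:ℝ) T, HasDerivWithinAt g (v t (g t)) (Iic t) t := by
    intro t ht
    have h1 := hg t ⟨le_of_lt ht.1, ht.2⟩
    rw [hgeq t ⟨le_of_lt ht.1, ht.2⟩] at h1
    exact h1.mono_of_mem_nhdsWithin (hmem t ht)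
  have hfs : ∀ t ∈ Ioc (0:ℝ) T, f t ∈ Metric.closedBall (0 : Matrix (Fin d) (Fin d) ℝ) R := by
    intro t ht
    rw [Metric.mem_closedBall, dist_zero_right]
    exact hfR t ⟨le_of_lt ht.1, ht.2⟩
  have hgs : ∀ t ∈ Ioc (0:ℝ) T, g t ∈ Metric.closedBall (0 : Matrix (Fin d) (Fin d) ℝ) R := by
    intro t ht
    rw [Metric.mem_closedBall, dist_zero_right]
    exact hgR t ⟨le_of_lt ht.1, ht.2⟩
  exact ODE_solution_unique_of_mem_Icc_left (fun t _ => hv t) hfc hf' hfs hgc hg' hgs hfg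

end RiccatiAux
/-- Existence, uniqueness, and positive semidefiniteness for the matrix Riccati
terminal-value problem `K' + Bᵀ K + K B − K C N⁻¹ Cᵀ K = 0` on `[0,T]`, `K(T) = H`,
with `N` symmetric positive definite and `H` symmetric positive semidefinite; solutions
are continuously differentiable symmetric-matrix-valued maps on `[0,T]`. -/
theorem matrix_riccati_existence_uniqueness {d m : ℕ} (T : ℝ) (hT : 0 < T)
    (B : Matrix (Fin d) (Fin d) ℝ) (C : Matrix (Fin d) (Fin m) ℝ)
    (N : Matrix (Fin m) (Fin m) ℝ) (hN : N.PosDef)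
    (H : Matrix (Fin d) (Fin d) ℝ) (hH : H.PosSemidef) :
    ∃ (K K' : ℝ → Matrix (Fin d) (Fin d) ℝ),
      ((∀ t ∈ Icc (0:ℝ) T, HasDerivWithinAt K (K' t) (Icc (0:ℝ) T) t) ∧
        ContinuousOn K' (Icc (0:ℝ) T) ∧
        (∀ t ∈ Icc (0:ℝ) T, (K t).IsSymm) ∧
        K T = H ∧
        (∀ t ∈ Icc (0:ℝ) T,
          K' t + Bᵀ * K t + K t * B - K t * C * N⁻¹ * Cᵀ * K t = 0)) ∧
      (∀ t ∈ Icc (0:ℝ) T, (K t).PosSemidef) ∧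
      (∀ K₂ K₂' : ℝ → Matrix (Fin d) (Fin d) ℝ,
        ((∀ t ∈ Icc (0:ℝ) T, HasDerivWithinAt K₂ (K₂' t) (Icc (0:ℝ) T) t) ∧
          ContinuousOn K₂' (Icc (0:ℝ) T) ∧
          (∀ t ∈ Icc (0:ℝ) T, (K₂ t).IsSymm) ∧
          K₂ T = H ∧
          (∀ t ∈ Icc (0:ℝ) T,
            K₂' t + Bᵀ * K₂ t + K₂ t * B - K₂ t * C * N⁻¹ * Cᵀ * K₂ t = 0)) →
        EqOn K K₂ (Icc (0:ℝ) T)) := by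
  classical
  set S : Matrix (Fin d) (Fin d) ℝ := C * N⁻¹ * Cᵀ with hSdef
  have hNi : (N⁻¹).PosDef := hN.inv
  have hS : S.PosSemidef := by
    have := hNi.posSemidef.mul_mul_conjTranspose_same C
    rwa [conjTranspose_eq_transpose_of_trivial] at this
  set Kf := RiccatiAux.K T B S H with hKf
  set K'f : ℝ → Matrix (Fin d) (Fin d) ℝ :=
    fun t => -(Bᵀ * Kf t) - Kf t * B + Kf t * S * Kf t with hK'f
  have hderiv : ∀ t ∈ Icc (0:ℝ) T, HasDerivAt Kf (K'f t) t := fun t ht =>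
    RiccatiAux.hasDerivAt_K T B S H (RiccatiAux.isUnit_W T B S H hS hH ht.2)
  have hKc : ContinuousOn Kf (Icc (0:ℝ) T) :=
    fun t ht => (hderiv t ht).continuousAt.continuousWithinAt
  refine ⟨Kf, K'f, ⟨fun t ht => (hderiv t ht).hasDerivWithinAt, ?_, ?_, ?_, ?_⟩, ?_, ?_⟩
  · exact ((continuousOn_const.mul hKc).neg.sub (hKc.mul continuousOn_const)).add
      ((hKc.mul continuousOn_const).mul hKc)
  · intro t ht
    exact RiccatiAux.symm_K T B S H hS hH ht.2
  · exact RiccatiAux.K_apply_T T B S H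
  · intro t ht
    have hKS : Kf t * S * Kf t = Kf t * C * N⁻¹ * Cᵀ * Kf t := by
      rw [hSdef]
      simp only [Matrix.mul_assoc]
    show (-(Bᵀ * Kf t) - Kf t * B + Kf t * S * Kf t) + Bᵀ * Kf t + Kf t * B
        - Kf t * C * N⁻¹ * Cᵀ * Kf t = 0
    rw [hKS]
    noncomm_ring
  · intro t ht
    exact RiccatiAux.psd_K T B S H hS hH ht.2
  · rintro K₂ K₂' ⟨h1, _h2, _h3, h4, h5⟩
    refine RiccatiAux.riccati_unique T B S Kf K₂ K'f K₂'
      (fun t ht => (hderiv t ht).hasDerivWithinAt)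
      (fun t _ht => rfl)
      h1
      ?_
      (by rw [h4]; exact RiccatiAux.K_apply_T T B S H)
    intro t ht
    have h := h5 t ht
    have e1 : K₂' t - (-(Bᵀ * K₂ t) - K₂ t * B + K₂ t * S * K₂ t)
        = K₂' t + Bᵀ * K₂ t + K₂ t * B - K₂ t * C * N⁻¹ * Cᵀ * K₂ t := by
      rw [hSdef]
      simp only [Matrix.mul_assoc]
      abel
    exact sub_eq_zero.mp (e1.trans h)
end
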